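/- If families A ⊆ C([n],a) and B ⊆ C([n],b) are cross-intersecting, then the families L(a,|A|) and L(b,|B|) are cross-intersecting as well. -/

import Mathlib

/-- `A` lexicographically precedes `B` if the smallest element of `A \ B`
is smaller than the smallest element of `B \ A`. -/
def lexLt (A B : Finset ℕ) : Prop := (A \ B).min < (B \ A).min

instance : DecidableRel lexLt := fun _ _ => inferInstanceAs (Decidable (_ < _))

/-- `L(k, m)`: the family of the first `m` sets of `C([n],k)` in the lexicographic
order, i.e. those `k`-element subsets of `[n]` preceded by fewer than `m` others. -/
def lexFam (n k m : ℕ) : Finset (Finset ℕ) :=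
  ((Finset.Icc 1 n).powersetCard k).filter
    (fun A => (((Finset.Icc 1 n).powersetCard k).filter (fun C => lexLt C A)).card < m)

open Finset
open scoped symmDiff



lemma coe_lt_finmin {s : Finset ℕ} {m : ℕ} (h : ∀ x ∈ s, m < x) : (m : WithTop ℕ) < s.min := by
  rcases s.eq_empty_or_nonempty with rfl | hs
  · simp
  · rw [← Finset.coe_min' hs]
    exact WithTop.coe_lt_coe.2 ((Finset.lt_min'_iff s hs).2 h)

-- characterization
lemma lexLt_iff {A B : Finset ℕ} (hne : A ≠ B) :
    lexLt A B ↔ (A ∆ B).min' (by rwa [Finset.nonempty_iff_ne_empty, Ne, Finset.symmDiff_eq_empty]) ∈ A := by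
  set m := (A ∆ B).min' (by rwa [Finset.nonempty_iff_ne_empty, Ne, Finset.symmDiff_eq_empty]) with hm
  have hmem : m ∈ A ∆ B := Finset.min'_mem _ _
  have hle : ∀ x ∈ A ∆ B, m ≤ x := fun x hx => Finset.min'_le _ _ hx
  constructor
  · intro h
    by_contra hmA
    have hmB : m ∈ B \ A := by
      rw [Finset.mem_symmDiff] at hmem
      rcases hmem with ⟨h1,_⟩|⟨h1,h2⟩
      · exact absurd h1 hmA
      · exact Finset.mem_sdiff.2 ⟨h1, h2⟩
    have h1 : (B \ A).min ≤ (m : WithTop ℕ) := Finset.min_le hmB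
    have h2 : (m : WithTop ℕ) < (A \ B).min := by
      apply coe_lt_finmin
      intro x hx
      rw [Finset.mem_sdiff] at hx
      have : x ∈ A ∆ B := Finset.mem_symmDiff.2 (Or.inl ⟨hx.1, hx.2⟩)
      have := hle x this
      have hne' : x ≠ m := fun h => hmA (h ▸ hx.1)
      exact_mod_cast lt_of_le_of_ne this (Ne.symm (by exact_mod_cast hne'))
    exact absurd h (not_lt.2 (h1.trans h2.le))
  · intro hmA
    have hmB : m ∉ B := by
      rw [Finset.mem_symmDiff] at hmem
      rcases hmem with ⟨_,h2⟩|⟨_,h2⟩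
      · exact h2
      · exact absurd hmA h2
    have h1 : (A \ B).min ≤ (m : WithTop ℕ) := Finset.min_le (Finset.mem_sdiff.2 ⟨hmA, hmB⟩)
    have h2 : (m : WithTop ℕ) < (B \ A).min := by
      apply coe_lt_finmin
      intro x hx
      rw [Finset.mem_sdiff] at hx
      have : x ∈ A ∆ B := Finset.mem_symmDiff.2 (Or.inr ⟨hx.1, hx.2⟩)
      have := hle x this
      have hne' : x ≠ m := fun h => hmB (h ▸ hx.1)
      exact_mod_cast lt_of_le_of_ne this (Ne.symm (by exact_mod_cast hne'))
    exact lt_of_le_of_lt h1 h2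

lemma not_lexLt_self (A : Finset ℕ) : ¬ lexLt A A := by
  simp [lexLt]

section Psi
variable {n : ℕ}

def gmap (n : ℕ) (j : Fin n) : ℕ := n - (j : ℕ)

lemma gmap_mem (j : Fin n) : gmap n j ∈ Finset.Icc 1 n := by
  simp only [gmap, Finset.mem_Icc]
  omega

lemma gmap_inj : Function.Injective (gmap n) := by
  intro i j h
  have hi := i.2; have hj := j.2
  simp only [gmap] at h
  exact Fin.ext (by omega)

lemma gmap_anti {i j : Fin n} (h : i < j) : gmap n j < gmap n i := by
  have hi := i.2; have hj := j.2
  have : (i:ℕ) < (j:ℕ) := h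
  simp only [gmap]; omega

lemma gmap_surj {a : ℕ} (ha : a ∈ Finset.Icc 1 n) : ∃ j : Fin n, gmap n j = a := by
  rw [Finset.mem_Icc] at ha
  exact ⟨⟨n - a, by omega⟩, by simp [gmap]; omega⟩

def chi (n : ℕ) (A : Finset ℕ) : Finset (Fin n) := Finset.univ.filter (fun j => gmap n j ∈ A)

def psi (n : ℕ) (A : Finset ℕ) : Finset (Fin n) := (chi n A)ᶜ

@[simp] lemma mem_chi {A : Finset ℕ} {j : Fin n} : j ∈ chi n A ↔ gmap n j ∈ A := by
  simp [chi]

@[simp] lemma mem_psi {A : Finset ℕ} {j : Fin n} : j ∈ psi n A ↔ gmap n j ∉ A := by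
  simp [psi]

lemma card_chi {A : Finset ℕ} (hA : A ⊆ Finset.Icc 1 n) : (chi n A).card = A.card := by
  apply Finset.card_bij (fun j _ => gmap n j)
  · intro j hj; exact mem_chi.1 hj
  · intro i _ j _ h; exact gmap_inj h
  · intro a ha
    obtain ⟨j, hj⟩ := gmap_surj (hA ha)
    exact ⟨j, mem_chi.2 (hj ▸ ha), hj⟩

lemma card_psi {A : Finset ℕ} (hA : A ⊆ Finset.Icc 1 n) : (psi n A).card = n - A.card := by
  rw [psi, Finset.card_compl, card_chi hA, Fintype.card_fin]

lemma chi_inj {A B : Finset ℕ} (hA : A ⊆ Finset.Icc 1 n) (hB : B ⊆ Finset.Icc 1 n)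
    (h : chi n A = chi n B) : A = B := by
  ext a
  constructor
  · intro ha
    obtain ⟨j, hj⟩ := gmap_surj (hA ha)
    have : j ∈ chi n A := mem_chi.2 (hj ▸ ha)
    rw [h] at this
    exact hj ▸ mem_chi.1 this
  · intro ha
    obtain ⟨j, hj⟩ := gmap_surj (hB ha)
    have : j ∈ chi n B := mem_chi.2 (hj ▸ ha)
    rw [← h] at this
    exact hj ▸ mem_chi.1 this

lemma psi_inj {A B : Finset ℕ} (hA : A ⊆ Finset.Icc 1 n) (hB : B ⊆ Finset.Icc 1 n)
    (h : psi n A = psi n B) : A = B :=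
  chi_inj hA hB (compl_injective h)

lemma chi_symmDiff (A B : Finset ℕ) : chi n A ∆ chi n B = chi n (A ∆ B) := by
  ext j
  simp [Finset.mem_symmDiff]

lemma psi_symmDiff (A B : Finset ℕ) : psi n A ∆ psi n B = chi n (A ∆ B) := by
  rw [psi, psi, compl_symmDiff_compl, chi_symmDiff]

lemma max'_eq_of_eq {α : Type*} [LinearOrder α] {s t : Finset α} (h : s = t) (hs : s.Nonempty) :
    s.max' hs = t.max' (h ▸ hs) := by subst h; rfl

lemma gmap_max'_of_mem_iff {D : Finset ℕ} {s : Finset (Fin n)} (hD : D.Nonempty)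
    (hsub : D ⊆ Finset.Icc 1 n) (hiff : ∀ j, j ∈ s ↔ gmap n j ∈ D) (h' : s.Nonempty) :
    gmap n (s.max' h') = D.min' hD := by
  obtain ⟨j₀, hj₀⟩ := gmap_surj (hsub (D.min'_mem hD))
  have hj₀m : j₀ ∈ s := (hiff j₀).2 (hj₀ ▸ D.min'_mem hD)
  have h1 : s.max' h' ≤ j₀ := by
    apply Finset.max'_le
    intro j hj
    by_contra hc
    push_neg at hc
    have := gmap_anti hc
    rw [hj₀] at this
    exact absurd (D.min'_le _ ((hiff j).1 hj)) (not_le.2 this)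
  have h2 : j₀ ≤ s.max' h' := Finset.le_max' _ _ hj₀m
  rw [le_antisymm h1 h2, hj₀]

lemma chi_nonempty {D : Finset ℕ} (hD : D.Nonempty) (hsub : D ⊆ Finset.Icc 1 n) :
    (chi n D).Nonempty := by
  obtain ⟨a, ha⟩ := hD
  obtain ⟨j, hj⟩ := gmap_surj (hsub ha)
  exact ⟨j, mem_chi.2 (hj ▸ ha)⟩

end Psi

section OrderLemmas
variable {n : ℕ} {A B : Finset ℕ}

lemma lexLt_iff_exists (hA : A ⊆ Finset.Icc 1 n) (hB : B ⊆ Finset.Icc 1 n) :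
    lexLt A B ↔ ∃ j : Fin n, gmap n j ∈ A ∧ gmap n j ∉ B ∧
      ∀ j' : Fin n, gmap n j' ∈ B → gmap n j' ∉ A → j' < j := by
  by_cases hAB : A = B
  · subst hAB
    simp only [not_lexLt_self, false_iff]
    rintro ⟨j, h1, h2, _⟩
    exact h2 h1
  · have hd : (A ∆ B).Nonempty := by
      rwa [Finset.nonempty_iff_ne_empty, Ne, Finset.symmDiff_eq_empty]
    set m := (A ∆ B).min' hd with hm
    have hmmem : m ∈ A ∆ B := Finset.min'_mem _ _
    rw [lexLt_iff hAB]
    constructor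
    · intro hmA
      have hmB : m ∉ B := by
        rw [Finset.mem_symmDiff] at hmmem
        rcases hmmem with ⟨_,h2⟩|⟨h1,h2⟩
        · exact h2
        · exact absurd hmA h2
      obtain ⟨j, hj⟩ := gmap_surj (hA hmA)
      refine ⟨j, by rw [hj]; exact hmA, by rw [hj]; exact hmB, ?_⟩
      intro j' h1 h2
      have hle : m ≤ gmap n j' :=
        Finset.min'_le _ _ (Finset.mem_symmDiff.2 (Or.inr ⟨h1, h2⟩))
      have hne : gmap n j' ≠ m := fun h => hmB (h ▸ h1)
      have hgt : gmap n j < gmap n j' := by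
        rw [hj]
        exact lt_of_le_of_ne hle (Ne.symm hne)
      by_contra hc
      push_neg at hc
      rcases eq_or_lt_of_le hc with h | h
      · rw [h] at hgt
        exact lt_irrefl _ hgt
      · exact absurd (gmap_anti h) (not_lt.2 hgt.le)
    · rintro ⟨j, hjA, hjB, hmax⟩
      by_contra hmA
      have hmB : m ∈ B := by
        rw [Finset.mem_symmDiff] at hmmem
        rcases hmmem with ⟨h1,_⟩|⟨h1,_⟩
        · exact absurd h1 hmA
        · exact h1
      obtain ⟨j₁, hj₁⟩ := gmap_surj (hB hmB)
      have hlt : j₁ < j := hmax j₁ (by rw [hj₁]; exact hmB) (by rw [hj₁]; exact hmA)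
      have h1 : gmap n j < gmap n j₁ := gmap_anti hlt
      have h2 : m ≤ gmap n j :=
        Finset.min'_le _ _ (Finset.mem_symmDiff.2 (Or.inl ⟨hjA, hjB⟩))
      rw [hj₁] at h1
      exact absurd (h2.trans h1.le) (not_le.2 (lt_of_le_of_lt h2 h1)).elim

lemma lexLt_iff_colex_psi (hA : A ⊆ Finset.Icc 1 n) (hB : B ⊆ Finset.Icc 1 n) :
    lexLt A B ↔ toColex (psi n A) < toColex (psi n B) := by
  rw [lexLt_iff_exists hA hB, Finset.Colex.toColex_lt_toColex_iff_exists_forall_lt]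
  constructor
  · rintro ⟨j, h1, h2, h3⟩
    exact ⟨j, mem_psi.2 h2, by simp [h1], fun b hb hb' =>
      h3 b (by simpa using hb') (by simpa using hb)⟩
  · rintro ⟨j, h1, h2, h3⟩
    exact ⟨j, by simpa using h2, by simpa using h1, fun j' hj1 hj2 =>
      h3 j' (by simpa using hj2) (by simpa using hj1)⟩

lemma lexLt_iff_colex_chi (hA : A ⊆ Finset.Icc 1 n) (hB : B ⊆ Finset.Icc 1 n) :
    lexLt A B ↔ toColex (chi n B) < toColex (chi n A) := by
  rw [lexLt_iff_exists hA hB, Finset.Colex.toColex_lt_toColex_iff_exists_forall_lt]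
  constructor
  · rintro ⟨j, h1, h2, h3⟩
    exact ⟨j, mem_chi.2 h1, by simp [h2], fun b hb hb' =>
      h3 b (by simpa using hb) (by simpa using hb')⟩
  · rintro ⟨j, h1, h2, h3⟩
    exact ⟨j, by simpa using h1, by simpa using h2, fun j' hj1 hj2 =>
      h3 j' (by simpa using hj1) (by simpa using hj2)⟩

end OrderLemmas

open scoped FinsetFamily

section Main
variable {n : ℕ}

lemma exists_psi_preimage {a : ℕ} (ha : a ≤ n) {T : Finset (Fin n)} (hT : T.card = n - a) :
    ∃ C, C ⊆ Finset.Icc 1 n ∧ C.card = a ∧ psi n C = T := by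
  refine ⟨Tᶜ.image (gmap n), ?_, ?_, ?_⟩
  · intro x hx
    obtain ⟨j, _, rfl⟩ := Finset.mem_image.1 hx
    exact gmap_mem j
  · rw [Finset.card_image_of_injective _ gmap_inj, Finset.card_compl, hT, Fintype.card_fin]
    omega
  · ext j
    rw [mem_psi]
    constructor
    · intro h
      by_contra hj
      exact h (Finset.mem_image_of_mem _ (Finset.mem_compl.2 hj))
    · intro hj h
      obtain ⟨j', hj', hjj⟩ := Finset.mem_image.1 h
      rw [gmap_inj hjj] at hj'
      exact Finset.mem_compl.1 hj' hj

lemma exists_chi_preimage {T : Finset (Fin n)} :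
    ∃ C, C ⊆ Finset.Icc 1 n ∧ C.card = T.card ∧ chi n C = T := by
  refine ⟨T.image (gmap n), ?_, ?_, ?_⟩
  · intro x hx
    obtain ⟨j, _, rfl⟩ := Finset.mem_image.1 hx
    exact gmap_mem j
  · rw [Finset.card_image_of_injective _ gmap_inj]
  · ext j
    rw [mem_chi]
    constructor
    · intro h
      obtain ⟨j', hj', hjj⟩ := Finset.mem_image.1 h
      rwa [gmap_inj hjj] at hj'
    · exact fun hj => Finset.mem_image_of_mem _ hj

lemma isInitSeg_shadow_iterate {𝒞 : Finset (Finset (Fin n))} {r : ℕ} (t : ℕ)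
    (h : Finset.Colex.IsInitSeg 𝒞 r) : Finset.Colex.IsInitSeg (∂^[t] 𝒞) (r - t) := by
  induction t generalizing r 𝒞 with
  | zero => simpa using h
  | succ t ih =>
    have hsh : Finset.Colex.IsInitSeg (∂ 𝒞) (r - 1) := by
      have h2 := h.shadow
      convert h2 using 2
    have h3 := ih hsh
    rw [Function.iterate_succ_apply, show r - (t + 1) = r - 1 - t by omega]
    exact h3

/-- **Kruskal–Katona theorem** (cross-intersecting form): if `𝒜 ⊆ C([n],a)` and
`ℬ ⊆ C([n],b)` are cross-intersecting, then so are `L(a,|𝒜|)` and `L(b,|ℬ|)`. -/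
theorem kruskal_katona_cross (n a b : ℕ)
    (𝒜 ℬ : Finset (Finset ℕ))
    (h𝒜 : 𝒜 ⊆ (Finset.Icc 1 n).powersetCard a)
    (hℬ : ℬ ⊆ (Finset.Icc 1 n).powersetCard b)
    (hcross : ∀ A ∈ 𝒜, ∀ B ∈ ℬ, (A ∩ B).Nonempty) :
    ∀ A ∈ lexFam n a 𝒜.card, ∀ B ∈ lexFam n b ℬ.card, (A ∩ B).Nonempty := by
  intro A hA B hB
  simp only [lexFam, Finset.mem_filter, Finset.mem_powersetCard] at hA hB
  obtain ⟨⟨hAsub, hAcard⟩, hArank⟩ := hA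
  obtain ⟨⟨hBsub, hBcard⟩, hBrank⟩ := hB
  -- trivial cases
  rcases 𝒜.eq_empty_or_nonempty with rfl | hAne
  · simp at hArank
  rcases ℬ.eq_empty_or_nonempty with rfl | hBne
  · simp at hBrank
  by_cases hab : n < a + b
  · have h1 : (A ∪ B).card + (A ∩ B).card = A.card + B.card :=
      Finset.card_union_add_card_inter A B
    have h2 : (A ∪ B).card ≤ n := by
      have := Finset.card_le_card (Finset.union_subset hAsub hBsub)
      simpa [Nat.card_Icc] using this
    rw [← Finset.card_pos]
    omega
  push_neg at hab
  have han : a ≤ n := by omega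
  have hbn : b ≤ n := by omega
  set t := n - a - b with ht
  by_contra hcon
  rw [Finset.not_nonempty_iff_eq_empty] at hcon
  have hdisjAB : ∀ x, x ∈ A → x ∉ B := by
    intro x hx hxB
    have : x ∈ A ∩ B := Finset.mem_inter.2 ⟨hx, hxB⟩
    simp [hcon] at this
  classical
  set W : Finset (Finset (Fin n)) := Finset.univ.powersetCard (n - a) with hW
  set Wb : Finset (Finset (Fin n)) := Finset.univ.powersetCard b with hWb
  set F : Finset (Finset (Fin n)) :=
    W.filter (fun S =>
      (W.filter (fun T => toColex T < toColex S)).card < 𝒜.card)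
    with hF
  -- members of powersetCard of subsets of Icc
  have hmemsub : ∀ C ∈ 𝒜, C ⊆ Finset.Icc 1 n ∧ C.card = a := by
    intro C hC
    exact Finset.mem_powersetCard.1 (h𝒜 hC)
  have hmemsubB : ∀ C ∈ ℬ, C ⊆ Finset.Icc 1 n ∧ C.card = b := by
    intro C hC
    exact Finset.mem_powersetCard.1 (hℬ hC)
  -- Step A : psi A ∈ F
  have hpsiAW : psi n A ∈ W := by
    rw [hW, Finset.mem_powersetCard]
    exact ⟨Finset.subset_univ _, by rw [card_psi hAsub, hAcard]⟩
  have hrankA : (W.filter (fun T => toColex T < toColex (psi n A))).card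
      = (((Finset.Icc 1 n).powersetCard a).filter (fun C => lexLt C A)).card := by
    symm
    apply Finset.card_nbij (psi n)
    · intro C hC
      rw [Finset.mem_coe, Finset.mem_filter, Finset.mem_powersetCard] at hC
      obtain ⟨⟨hCsub, hCcard⟩, hClex⟩ := hC
      rw [Finset.mem_coe, Finset.mem_filter, Finset.mem_powersetCard]
      exact ⟨⟨Finset.subset_univ _, by rw [card_psi hCsub, hCcard]⟩,
        (lexLt_iff_colex_psi hCsub hAsub).1 hClex⟩
    · intro C₁ h₁ C₂ h₂ h
      have h₁' := Finset.mem_coe.1 h₁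
      have h₂' := Finset.mem_coe.1 h₂
      rw [Finset.mem_filter, Finset.mem_powersetCard] at h₁' h₂'
      exact psi_inj h₁'.1.1 h₂'.1.1 h
    · intro T hT
      have hT' := Finset.mem_coe.1 hT
      rw [Finset.mem_filter, hW, Finset.mem_powersetCard] at hT'
      obtain ⟨⟨_, hTcard⟩, hTlt⟩ := hT'
      obtain ⟨C, hCsub, hCcard, hCpsi⟩ := exists_psi_preimage han hTcard
      refine ⟨C, Finset.mem_coe.2 ?_, hCpsi⟩
      rw [Finset.mem_filter, Finset.mem_powersetCard]
      exact ⟨⟨hCsub, hCcard⟩, (lexLt_iff_colex_psi hCsub hAsub).2 (by rw [hCpsi]; exact hTlt)⟩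
  have hpsiAF : psi n A ∈ F := by
    rw [hF, Finset.mem_filter]
    exact ⟨hpsiAW, by rw [hrankA]; exact hArank⟩
  -- Step B : #F ≤ #𝒜
  have hkey : ∀ T₁ T₂ : Finset (Fin n), T₁ ∈ W →
      toColex T₁ < toColex T₂ →
      (W.filter (fun T => toColex T < toColex T₁)).card
      < (W.filter (fun T => toColex T < toColex T₂)).card := by
    intro T₁ T₂ hT₁ hlt
    apply Finset.card_lt_card
    rw [Finset.ssubset_iff_of_subset
      (Finset.monotone_filter_right _ (fun T _ hT => lt_trans hT hlt))]
    exact ⟨T₁, Finset.mem_filter.2 ⟨hT₁, hlt⟩, fun hcon' =>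
      lt_irrefl _ (Finset.mem_filter.1 hcon').2⟩
  have hFcard : F.card ≤ 𝒜.card := by
    have hle : F.card ≤ (Finset.range 𝒜.card).card := by
      apply Finset.card_le_card_of_injOn
        (fun S => (W.filter (fun T => toColex T < toColex S)).card)
      · intro S hS
        rw [hF, Finset.mem_coe, Finset.mem_filter] at hS
        exact Finset.mem_coe.2 (Finset.mem_range.2 hS.2)
      · intro S₁ h₁ S₂ h₂ heq
        by_contra hne
        simp only [Finset.mem_coe] at h₁ h₂
        rw [hF, Finset.mem_filter] at h₁ h₂
        rcases lt_trichotomy (toColex S₁) (toColex S₂) with h | h | h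
        · exact absurd heq (Nat.ne_of_lt (hkey S₁ S₂ h₁.1 h))
        · exact hne (toColex_inj.1 h)
        · exact absurd heq.symm (Nat.ne_of_lt (hkey S₂ S₁ h₂.1 h))
    simpa using hle
  -- Step C : F is an initial segment
  have hFinit : Finset.Colex.IsInitSeg F (n - a) := by
    constructor
    · intro S hS
      have hS' := Finset.mem_coe.1 hS
      rw [hF, Finset.mem_filter, hW, Finset.mem_powersetCard] at hS'
      exact hS'.1.2
    · intro s u hs hu
      rw [hF, Finset.mem_filter] at hs ⊢
      refine ⟨Finset.mem_powersetCard.2 ⟨Finset.subset_univ _, hu.2⟩, ?_⟩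
      refine lt_of_le_of_lt ?_ hs.2
      apply Finset.card_le_card
      exact Finset.monotone_filter_right _ (fun T _ hT => lt_trans hT hu.1)
  -- Step D : image family
  set 𝒜' : Finset (Finset (Fin n)) := 𝒜.image (psi n) with h𝒜'
  have h𝒜'card : 𝒜'.card = 𝒜.card := by
    apply Finset.card_image_of_injOn
    intro C₁ h₁ C₂ h₂ h
    exact psi_inj (hmemsub C₁ h₁).1 (hmemsub C₂ h₂).1 h
  have h𝒜'sized : (𝒜' : Set (Finset (Fin n))).Sized (n - a) := by
    intro S hS
    rw [h𝒜', Finset.coe_image] at hS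
    obtain ⟨C, hC, rfl⟩ := hS
    rw [card_psi (hmemsub C hC).1, (hmemsub C hC).2]
  -- Step E : Kruskal–Katona
  have hKK : (∂^[t] F).card ≤ (∂^[t] 𝒜').card := by
    have hkk := Finset.iterated_kk (k := t) h𝒜'sized (by rw [h𝒜'card]; exact hFcard) hFinit
    convert hkk using 3 <;> exact congrArg _ (Subsingleton.elim _ _)
  -- Step F : disjointness of iterated shadow of 𝒜' with image of ℬ
  set ℬ' : Finset (Finset (Fin n)) := ℬ.image (chi n) with hℬ'
  have hℬ'card : ℬ'.card = ℬ.card := by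
    apply Finset.card_image_of_injOn
    intro C₁ h₁ C₂ h₂ h
    exact chi_inj (hmemsubB C₁ h₁).1 (hmemsubB C₂ h₂).1 h
  have hdisj : Disjoint (∂^[t] 𝒜') ℬ' := by
    rw [Finset.disjoint_right]
    intro S hSB hSsh
    rw [hℬ', Finset.mem_image] at hSB
    obtain ⟨B', hB', rfl⟩ := hSB
    rw [Finset.mem_shadow_iterate_iff_exists_sdiff] at hSsh
    obtain ⟨s, hs, hsub', _⟩ := hSsh
    rw [h𝒜', Finset.mem_image] at hs
    obtain ⟨A', hA', rfl⟩ := hs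
    obtain ⟨x, hx⟩ := hcross A' hA' B' hB'
    rw [Finset.mem_inter] at hx
    obtain ⟨j, hj⟩ := gmap_surj ((hmemsub A' hA').1 hx.1)
    have hj1 : j ∈ chi n B' := mem_chi.2 (hj ▸ hx.2)
    have hj2 := mem_psi.1 (hsub' hj1)
    exact hj2 (hj ▸ hx.1)
  -- Step G : cardinality bound
  have hsizedSh : (∂^[t] 𝒜' : Set (Finset (Fin n))).Sized b := by
    have := h𝒜'sized.shadow_iterate (k := t)
    rwa [show n - a - t = b by omega] at this
  have hShWb : ∂^[t] 𝒜' ⊆ Wb := by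
    intro S hS
    rw [hWb, Finset.mem_powersetCard]
    exact ⟨Finset.subset_univ _, hsizedSh hS⟩
  have hℬ'Wb : ℬ' ⊆ Wb := by
    intro S hS
    rw [hℬ', Finset.mem_image] at hS
    obtain ⟨C, hC, rfl⟩ := hS
    rw [hWb, Finset.mem_powersetCard]
    exact ⟨Finset.subset_univ _, by rw [card_chi (hmemsubB C hC).1, (hmemsubB C hC).2]⟩
  have hG : (∂^[t] 𝒜').card + ℬ.card ≤ Wb.card := by
    rw [← hℬ'card, ← Finset.card_union_of_disjoint hdisj]
    exact Finset.card_le_card (Finset.union_subset hShWb hℬ'Wb)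
  -- Step H : chi B is in the iterated shadow of F
  have hchiBsub : chi n B ⊆ psi n A := by
    intro j hj
    exact mem_psi.2 (fun hjA => hdisjAB _ hjA (mem_chi.1 hj))
  have hchiB : chi n B ∈ ∂^[t] F := by
    rw [Finset.mem_shadow_iterate_iff_exists_sdiff]
    refine ⟨psi n A, hpsiAF, hchiBsub, ?_⟩
    rw [Finset.card_sdiff_of_subset hchiBsub, card_psi hAsub, card_chi hBsub, hAcard, hBcard]
  -- Step I : lower bound for the iterated shadow of F
  have hDinit : Finset.Colex.IsInitSeg (∂^[t] F) b := by
    have := isInitSeg_shadow_iterate t hFinit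
    rwa [show n - a - t = b by omega] at this
  have hI : (Wb.filter (fun T => toColex T ≤ toColex (chi n B))).card
      ≤ (∂^[t] F).card := by
    apply Finset.card_le_card
    intro T hT
    rw [Finset.mem_filter, hWb, Finset.mem_powersetCard] at hT
    obtain ⟨⟨_, hTcard⟩, hTle⟩ := hT
    rcases eq_or_lt_of_le hTle with h | h
    · rwa [toColex_inj.1 h]
    · exact hDinit.2 hchiB ⟨h, hTcard⟩
  -- Step J : counting via rank of B
  have hJ : (Wb.filter (fun T => ¬ toColex T ≤ toColex (chi n B))).card
      < ℬ.card := by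
    have hcount : (Wb.filter (fun T =>
        toColex (chi n B) < toColex T)).card
        = (((Finset.Icc 1 n).powersetCard b).filter (fun C => lexLt C B)).card := by
      symm
      apply Finset.card_nbij (chi n)
      · intro C hC
        rw [Finset.mem_coe, Finset.mem_filter, Finset.mem_powersetCard] at hC
        obtain ⟨⟨hCsub, hCcard⟩, hClex⟩ := hC
        rw [Finset.mem_coe, Finset.mem_filter, hWb, Finset.mem_powersetCard]
        exact ⟨⟨Finset.subset_univ _, by rw [card_chi hCsub, hCcard]⟩,
          (lexLt_iff_colex_chi hCsub hBsub).1 hClex⟩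
      · intro C₁ h₁ C₂ h₂ h
        have h₁' := Finset.mem_coe.1 h₁
        have h₂' := Finset.mem_coe.1 h₂
        rw [Finset.mem_filter, Finset.mem_powersetCard] at h₁' h₂'
        exact chi_inj h₁'.1.1 h₂'.1.1 h
      · intro T hT
        have hT' := Finset.mem_coe.1 hT
        rw [Finset.mem_filter, hWb, Finset.mem_powersetCard] at hT'
        obtain ⟨⟨_, hTcard⟩, hTlt⟩ := hT'
        obtain ⟨C, hCsub, hCcard, hCchi⟩ := exists_chi_preimage (T := T)
        refine ⟨C, Finset.mem_coe.2 ?_, hCchi⟩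
        rw [Finset.mem_filter, Finset.mem_powersetCard]
        exact ⟨⟨hCsub, by rw [hCcard, hTcard]⟩,
          (lexLt_iff_colex_chi hCsub hBsub).2 (by rw [hCchi]; exact hTlt)⟩
    have heqfilter : (Wb.filter (fun T =>
        ¬ toColex T ≤ toColex (chi n B))) =
        (Wb.filter (fun T =>
        toColex (chi n B) < toColex T)) := by
      apply Finset.filter_congr
      intro T _
      simp [not_le]
    rw [heqfilter, hcount]
    exact hBrank
  have hpart : (Wb.filter (fun T =>
        toColex T ≤ toColex (chi n B))).card
      + (Wb.filter (fun T =>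
        ¬ toColex T ≤ toColex (chi n B))).card = Wb.card :=
    Finset.card_filter_add_card_filter_not _
  omega
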